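/- Let α ∈ (0,2] and α' ∈ (0,1]. Let S be a symmetric strictly stable random variable with exponent α and let M be a Mittag-Leffler random variable with parameter α', independent of S. Then S·M^{1/α} has the Linnik distribution with parameter α·α', i.e., E[exp(i·t·S·M^{1/α})] = 1/(1+|t|^{αα'}) for all t ∈ ℝ. -/

import Mathlib

open MeasureTheory ProbabilityTheory Filter Set Complex
open scoped Topology ENNReal

/-- Let `α ∈ (0,2]`, `α' ∈ (0,1]`. If `S` is a symmetric strictly stable
random variable with exponent `α` (characteristic function `exp (-|t|^α)`) and `M` is an
independent Mittag-Leffler random variable with parameter `α'`, then `S·M^(1/α)` has the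
Linnik distribution with parameter `α·α'`:
`E[exp (i·t·S·M^(1/α))] = 1/(1+|t|^(α·α'))` for all `t ∈ ℝ`. -/
theorem stable_times_mittagLeffler_power_is_linnik
    {Ω : Type*} [MeasurableSpace Ω] (P : Measure Ω) [IsProbabilityMeasure P]
    (α α' : ℝ) (hα0 : 0 < α) (hα2 : α ≤ 2) (hα'0 : 0 < α') (hα'1 : α' ≤ 1)
    (S M : Ω → ℝ) (hSm : Measurable S) (hMm : Measurable M)
    (hS : ∀ t : ℝ,
      ∫ ω, Complex.exp (Complex.I * ((t * S ω : ℝ) : ℂ)) ∂P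
        = ((Real.exp (-(|t| ^ α)) : ℝ) : ℂ))
    (hMnn : ∀ᵐ ω ∂P, 0 ≤ M ω)
    (hM : ∀ s : ℝ, 0 ≤ s →
      ∫ ω, Real.exp (-(s * M ω)) ∂P = (1 + s ^ α')⁻¹)
    (hindep : IndepFun S M P) :
    ∀ t : ℝ,
      ∫ ω, Complex.exp (Complex.I * ((t * (S ω * (M ω) ^ (1 / α)) : ℝ) : ℂ)) ∂P
        = (((1 + |t| ^ (α * α'))⁻¹ : ℝ) : ℂ) := by
  intro t
  have hα : α ≠ 0 := hα0.ne'
  set f : ℝ × ℝ → ℂ := fun p => Complex.exp (Complex.I * ((t * (p.1 * p.2 ^ (1 / α)) : ℝ) : ℂ))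
    with hfdef
  have hfm : Measurable f := by fun_prop
  have hSM : Measurable (fun ω => (S ω, M ω)) := hSm.prodMk hMm
  have hmap : P.map (fun ω => (S ω, M ω)) = (P.map S).prod (P.map M) :=
    (indepFun_iff_map_prod_eq_prod_map_map hSm.aemeasurable hMm.aemeasurable).mp hindep
  haveI : IsProbabilityMeasure (P.map S) := Measure.isProbabilityMeasure_map hSm.aemeasurable
  haveI : IsProbabilityMeasure (P.map M) := Measure.isProbabilityMeasure_map hMm.aemeasurable
  have hnorm : ∀ p : ℝ × ℝ, ‖f p‖ ≤ 1 := by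
    intro p
    simp only [hfdef]
    rw [mul_comm, Complex.norm_exp_ofReal_mul_I]
  have hint : Integrable f ((P.map S).prod (P.map M)) :=
    (integrable_const (1 : ℝ)).mono' hfm.aestronglyMeasurable
      (ae_of_all _ (by simpa using hnorm))
  have step1 : ∫ ω, Complex.exp (Complex.I * ((t * (S ω * (M ω) ^ (1 / α)) : ℝ) : ℂ)) ∂P
      = ∫ p, f p ∂((P.map S).prod (P.map M)) := by
    rw [← hmap, integral_map hSM.aemeasurable hfm.aestronglyMeasurable]
  rw [step1, integral_prod_symm f hint]
  -- inner integral
  have hae : ∀ᵐ m ∂(P.map M), 0 ≤ m := by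
    exact (ae_map_iff hMm.aemeasurable measurableSet_Ici).mpr hMnn
  have inner : ∀ m : ℝ, 0 ≤ m →
      ∫ x, f (x, m) ∂(P.map S) = ((Real.exp (-(|t| ^ α * m)) : ℝ) : ℂ) := by
    intro m hm
    have h1 : ∀ x : ℝ, f (x, m) = Complex.exp (Complex.I * (((t * m ^ (1 / α)) * x : ℝ) : ℂ)) := by
      intro x; simp only [hfdef]; ring_nf
    simp only [h1]
    rw [integral_map hSm.aemeasurable (Measurable.aestronglyMeasurable (by fun_prop))]
    rw [hS (t * m ^ (1 / α))]
    congr 2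
    rw [abs_mul, _root_.abs_of_nonneg (Real.rpow_nonneg hm _),
      Real.mul_rpow (abs_nonneg t) (Real.rpow_nonneg hm _),
      ← Real.rpow_mul hm, one_div, inv_mul_cancel₀ hα, Real.rpow_one]
  have outer : ∫ m, ∫ x, f (x, m) ∂(P.map S) ∂(P.map M)
      = ∫ m, ((Real.exp (-(|t| ^ α * m)) : ℝ) : ℂ) ∂(P.map M) := by
    refine integral_congr_ae ?_
    filter_upwards [hae] with m hm using inner m hm
  rw [outer, integral_map hMm.aemeasurable (Measurable.aestronglyMeasurable (by fun_prop))]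
  have h2 : ∫ ω, Real.exp (-(|t| ^ α * M ω)) ∂P = (1 + (|t| ^ α) ^ α')⁻¹ :=
    hM _ (Real.rpow_nonneg (abs_nonneg t) _)
  rw [show ((1 + |t| ^ (α * α'))⁻¹ : ℝ) = (1 + (|t| ^ α) ^ α')⁻¹ by
      rw [Real.rpow_mul (abs_nonneg t)], ← h2]
  exact integral_ofReal
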